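/- Let X be a topological space. Then X^ω is pseudocompact if and only if for every countable family {(U_{n,k})_k : n ∈ ℕ} of sequences of pairwise disjoint nonempty open subsets of X, the intersection ⋂_n u((U_{n,k})_k) is nonempty, where u((U_{n,k})_k) is the set of free ultrafilters p such that the sequence of sets (U_{n,k})_k p-accumulates at some point of X. -/

import Mathlib

open Set Filter Topology Function

/-- A free ultrafilter on ℕ: one containing no singleton. -/
def FreeUF (p : Ultrafilter ℕ) : Prop := ∀ n : ℕ, ({n} : Set ℕ) ∉ p

/-- `l` is the `p`-limit of the sequence `x`. -/
def PLim {X : Type*} [TopologicalSpace X] (p : Ultrafilter ℕ) (x : ℕ → X) (l : X) : Prop :=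
  Filter.Tendsto x (p : Filter ℕ) (nhds l)

/-- A βω-space: the closure of any countably infinite discrete subset with compact closure
is homeomorphic to βℕ. -/
def BetaOmegaSpace (X : Type*) [TopologicalSpace X] : Prop :=
  ∀ M : Set X, M.Countable → M.Infinite → DiscreteTopology M → IsCompact (closure M) →
    Nonempty (closure M ≃ₜ StoneCech ℕ)

/-- Keisler–Rudin (Rudin–Keisler) order on ultrafilters on ℕ. -/
def RKle (p q : Ultrafilter ℕ) : Prop := ∃ f : ℕ → ℕ, Ultrafilter.map f q = p

/-- A homogeneous space. -/
def Homogeneous (X : Type*) [TopologicalSpace X] : Prop :=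
  ∀ x y : X, ∃ h : X ≃ₜ X, h x = y

/-- Pseudocompactness: every continuous real-valued function is bounded. -/
def Pseudocompact (Y : Type*) [TopologicalSpace Y] : Prop :=
  ∀ f : Y → ℝ, Continuous f → ∃ C : ℝ, ∀ y, |f y| ≤ C

/-- If `e'` is a strictly monotone selection from the range of strictly monotone `e`,
then `e ≤ e'` pointwise. -/
lemma sub_ge {e e' : ℕ → ℕ} (he : StrictMono e) (he' : StrictMono e')
    (h : ∀ i, ∃ j, e' i = e j) : ∀ i, e i ≤ e' i := by
  intro i
  classical
  set φ : ℕ → ℕ := fun i => (h i).choose with hφ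
  have hφe : ∀ i, e' i = e (φ i) := fun i => (h i).choose_spec
  have hφmono : StrictMono φ := by
    intro a b hab
    have : e (φ a) < e (φ b) := by rw [← hφe, ← hφe]; exact he' hab
    exact he.lt_iff_lt.1 this
  calc e i ≤ e (φ i) := he.monotone (hφmono.le_apply)
    _ = e' i := (hφe i).symm

/-- Dichotomy: along a subsequence, either the sequence of open sets has a point
near which it accumulates cofinitely, or it admits an infinite pairwise disjoint
open refinement. -/
lemma dichotomy {X : Type*} [TopologicalSpace X]
    (A : ℕ → Set X) (hAopen : ∀ k, IsOpen (A k)) (hAne : ∀ k, (A k).Nonempty)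
    (e : ℕ → ℕ) (he : StrictMono e) :
    ∃ e' : ℕ → ℕ, StrictMono e' ∧ (∀ i, ∃ j, e' i = e j) ∧
      ((∃ x : X, ∀ V ∈ nhds x, {i | (V ∩ A (e' i)).Nonempty}ᶜ.Finite) ∨
       (∃ W : ℕ → Set X, (∀ i, IsOpen (W i)) ∧ (∀ i, (W i).Nonempty) ∧
         (∀ i, W i ⊆ A (e' i)) ∧ ∀ i j, i ≠ j → W i ∩ W j = ∅)) := by
  classical
  by_cases hα : ∃ e' : ℕ → ℕ, StrictMono e' ∧ (∀ i, ∃ j, e' i = e j) ∧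
      ∃ x : X, ∀ V ∈ nhds x, {i | (V ∩ A (e' i)).Nonempty}ᶜ.Finite
  · obtain ⟨e', h1, h2, h3⟩ := hα
    exact ⟨e', h1, h2, Or.inl h3⟩
  push_neg at hα
  have H : ∀ e' : ℕ → ℕ, StrictMono e' → (∀ i, ∃ j, e' i = e j) → ∀ x : X,
      ∃ V ∈ nhds x, ({i | (V ∩ A (e' i)).Nonempty}ᶜ).Infinite := by
    intro e' h1 h2 x
    have := hα e' h1 h2 x
    obtain ⟨V, hV, hVfin⟩ := this
    exact ⟨V, hV, hVfin⟩
  -- one step of the recursion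
  have step : ∀ e' : ℕ → ℕ, StrictMono e' → (∀ i, ∃ j, e' i = e j) →
      ∃ (e'' : ℕ → ℕ) (V : Set X), StrictMono e'' ∧ (∀ i, ∃ j, e'' i = e' j) ∧
        e' 0 < e'' 0 ∧ IsOpen V ∧ (V ∩ A (e' 0)).Nonempty ∧
        ∀ i, A (e'' i) ∩ V = ∅ := by
    intro e' h1 h2
    obtain ⟨x, hx⟩ := hAne (e' 0)
    obtain ⟨V₀, hV₀, hZ₀⟩ := H e' h1 h2 x
    obtain ⟨V, hVsub, hVopen, hxV⟩ := mem_nhds_iff.1 hV₀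
    have hZ : ({i | (V ∩ A (e' i)).Nonempty}ᶜ).Infinite := by
      refine hZ₀.mono ?_
      intro i hi
      simp only [mem_compl_iff, mem_setOf_eq] at hi ⊢
      intro hcon
      exact hi (hcon.mono (inter_subset_inter_left _ hVsub))
    have h0 : 0 ∉ {i | (V ∩ A (e' i)).Nonempty}ᶜ := by
      simp only [mem_compl_iff, mem_setOf_eq, not_not]
      exact ⟨x, hxV, hx⟩
    set Z : ℕ → Prop := fun i => i ∈ {i | (V ∩ A (e' i)).Nonempty}ᶜ with hZ_def
    have hZinf : (setOf Z).Infinite := hZ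
    refine ⟨fun i => e' (Nat.nth Z i), V, h1.comp (Nat.nth_strictMono hZinf), ?_, ?_, hVopen,
      ⟨x, hxV, hx⟩, ?_⟩
    · exact fun i => ⟨Nat.nth Z i, rfl⟩
    · have : Nat.nth Z 0 ≠ 0 := by
        intro hcon
        have := Nat.nth_mem_of_infinite hZinf 0
        rw [hcon] at this
        exact h0 this
      exact h1 (Nat.pos_of_ne_zero this)
    · intro i
      have := Nat.nth_mem_of_infinite hZinf i
      simp only [hZ_def, mem_compl_iff, mem_setOf_eq] at this
      rw [Set.not_nonempty_iff_eq_empty] at this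
      rw [inter_comm]
      exact this
  -- iterate the step
  set D := {e' : ℕ → ℕ // StrictMono e' ∧ ∀ i, ∃ j, e' i = e j} with hD_def
  have step' : ∀ d : D, ∃ (d' : D) (V : Set X),
      d.1 0 < d'.1 0 ∧ IsOpen V ∧ (V ∩ A (d.1 0)).Nonempty ∧
      (∀ i, A (d'.1 i) ∩ V = ∅) ∧ (∀ i, ∃ j, d'.1 i = d.1 j) := by
    rintro ⟨e', h1, h2⟩
    obtain ⟨e'', V, g1, g2, g3, g4, g5, g6⟩ := step e' h1 h2
    have hrange : ∀ i, ∃ j, e'' i = e j := by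
      intro i
      obtain ⟨j, hj⟩ := g2 i
      obtain ⟨j', hj'⟩ := h2 j
      exact ⟨j', by rw [hj, hj']⟩
    exact ⟨⟨e'', g1, hrange⟩, V, g3, g4, g5, g6, g2⟩
  choose Fn Vn hlt hVopen hVne hVdisj hFrange using step'
  set d₀ : D := ⟨e, he, fun i => ⟨i, rfl⟩⟩ with hd₀
  set seq : ℕ → D := fun s => Fn^[s] d₀ with hseq
  have hseq_succ : ∀ s, seq (s + 1) = Fn (seq s) := by
    intro s
    simp only [hseq, Function.iterate_succ_apply']
  set kk : ℕ → ℕ := fun s => (seq s).1 0 with hkk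
  have hkmono : StrictMono kk := by
    apply strictMono_nat_of_lt_succ
    intro s
    rw [hkk]
    simp only
    rw [hseq_succ]
    exact hlt (seq s)
  -- ranges decrease along the chain
  have hchain : ∀ s r, ∀ i, ∃ j, (seq (s + r)).1 i = (seq s).1 j := by
    intro s r
    induction r with
    | zero => exact fun i => ⟨i, rfl⟩
    | succ r IH =>
      intro i
      have h1 : ∀ i, ∃ j, (seq (s + r + 1)).1 i = (seq (s + r)).1 j := by
        rw [hseq_succ]
        exact hFrange (seq (s + r))
      obtain ⟨j, hj⟩ := h1 i
      obtain ⟨j', hj'⟩ := IH j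
      exact ⟨j', by rw [show s + (r+1) = s + r + 1 by ring, hj, hj']⟩
  set W : ℕ → Set X := fun s => Vn (seq s) ∩ A (kk s) with hWdef
  refine ⟨kk, hkmono, ?_, Or.inr ⟨W, ?_, ?_, ?_, ?_⟩⟩
  · intro s
    exact (seq s).2.2 0
  · exact fun s => ((hVopen (seq s)).inter (hAopen _))
  · intro s
    obtain ⟨x, hx1, hx2⟩ := hVne (seq s)
    exact ⟨x, hx1, hx2⟩
  · exact fun s => inter_subset_right
  · -- disjointness
    have key : ∀ s t, s < t → W s ∩ W t = ∅ := by
      intro s t hst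
      have h1 : ∀ i, A ((seq (s+1)).1 i) ∩ Vn (seq s) = ∅ := by
        rw [hseq_succ]
        exact hVdisj (seq s)
      obtain ⟨r, hr⟩ : ∃ r, t = (s + 1) + r := ⟨t - (s+1), by omega⟩
      obtain ⟨j, hj⟩ := hchain (s+1) r 0
      have hkt : kk t = (seq (s+1)).1 j := by rw [hkk]; simp only; rw [hr]; exact hj
      rw [Set.eq_empty_iff_forall_notMem]
      rintro z ⟨⟨hz1, _⟩, ⟨_, hz4⟩⟩
      rw [hkt] at hz4
      have := h1 j
      rw [Set.eq_empty_iff_forall_notMem] at this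
      exact this z ⟨hz4, hz1⟩
    intro i j hij
    rcases lt_or_gt_of_ne hij with h | h
    · exact key i j h
    · rw [inter_comm]; exact key j i h

lemma freeUF_le_cofinite {p : Ultrafilter ℕ} (hp : FreeUF p) : (p : Filter ℕ) ≤ cofinite :=
  Filter.le_cofinite_iff_compl_singleton_mem.2 fun n =>
    Ultrafilter.compl_mem_iff_notMem.2 (hp n)

lemma mem_of_compl_finite {p : Ultrafilter ℕ} (hp : FreeUF p) {s : Set ℕ} (hs : sᶜ.Finite) :
    s ∈ p := by
  have h := hs.compl_mem_cofinite
  rw [compl_compl] at h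
  exact freeUF_le_cofinite hp h

lemma forward_dir {X : Type*} [TopologicalSpace X] [CompletelyRegularSpace X]
    (hP : Pseudocompact (ℕ → X))
    (U : ℕ → ℕ → Set X) (hopen : ∀ n k, IsOpen (U n k)) (hne : ∀ n k, (U n k).Nonempty) :
    ∃ p : Ultrafilter ℕ, FreeUF p ∧
      ∀ n, ∃ x : X, ∀ V ∈ nhds x, {k | (V ∩ U n k).Nonempty} ∈ p := by
  classical
  set c : ℕ → ℕ → X := fun n k => (hne n k).some with hc_def
  have hc : ∀ n k, c n k ∈ U n k := fun n k => (hne n k).some_mem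
  set W : ℕ → Set (ℕ → X) := fun k => Set.pi (Set.Iic k) (fun n => U n k) with hW_def
  have hWmem : ∀ k z, z ∈ W k ↔ ∀ n ≤ k, z n ∈ U n k := by
    intro k z; simp [hW_def, Set.mem_pi]
  have hy_mem : ∀ k, (fun n => c n k) ∈ W k := fun k => (hWmem k _).2 fun n _ => hc n k
  -- cluster point of the sequence W
  have key : ∃ y : ℕ → X, ∀ V ∈ nhds y, {k | (V ∩ W k).Nonempty}.Infinite := by
    by_contra h
    push_neg at h
    -- build bump functions
    have hg : ∀ n k, ∃ g : X → ℝ, Continuous g ∧ g (c n k) = 1 ∧ (∀ x, x ∉ U n k → g x = 0) ∧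
        (∀ x, 0 ≤ g x) := by
      intro n k
      obtain ⟨f, fc, f0, f1⟩ := CompletelyRegularSpace.completely_regular (c n k) (U n k)ᶜ
        (hopen n k).isClosed_compl (by simp [hc n k])
      refine ⟨fun x => 1 - (f x : ℝ), by continuity, by simp [f0], ?_, ?_⟩
      · intro x hx
        have : f x = 1 := f1 hx
        simp [this]
      · intro x
        have := (f x).2.2
        simpa using this
    choose g hgc hg1 hg0 hgnn using hg
    set F : ℕ → (ℕ → X) → ℝ := fun k z => ∏ n ∈ Finset.range (k+1), g n k (z n) with hF_def
    have hFc : ∀ k, Continuous (F k) := fun k =>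
      continuous_finset_prod _ fun n _ => (hgc n k).comp (continuous_apply n)
    have hFnn : ∀ k z, 0 ≤ F k z := fun k z =>
      Finset.prod_nonneg fun n _ => hgnn n k (z n)
    have hFsup : ∀ k z, F k z ≠ 0 → z ∈ W k := by
      intro k z hz
      rw [hWmem]
      intro n hn
      by_contra hzn
      exact hz (Finset.prod_eq_zero (Finset.mem_range.2 (Nat.lt_succ_of_le hn)) (hg0 n k _ hzn))
    have hF1 : ∀ k, F k (fun n => c n k) = 1 := fun k =>
      Finset.prod_eq_one fun n _ => hg1 n k
    set Φ : (ℕ → X) → ℝ := fun z => ∑ᶠ (k : ℕ), (((k : ℕ) : ℝ) * F k z + F k z) with hΦ_def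
    have hlf : LocallyFinite (fun (k : ℕ) => support (fun z => ((k : ℕ) : ℝ) * F k z + F k z)) := by
      intro z
      obtain ⟨V, hV, hfin⟩ := h z
      refine ⟨V, hV, hfin.subset ?_⟩
      rintro k ⟨w, hw1, hw2⟩
      have : F k w ≠ 0 := by
        intro h0; apply hw1; simp [mem_support, h0]
      exact ⟨w, hw2, hFsup k w this⟩
    have hΦc : Continuous Φ :=
      continuous_finsum (fun (k : ℕ) => (continuous_const.mul (hFc k)).add (hFc k)) hlf
    obtain ⟨C, hC⟩ := hP Φ hΦc
    obtain ⟨k, hk⟩ := exists_nat_gt C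
    have hsupfin : (support fun (j : ℕ) => ((j : ℕ) : ℝ) * F j (fun n => c n k) + F j (fun n => c n k)).Finite := by
      obtain ⟨V, hV, hfin⟩ := h (fun n => c n k)
      refine hfin.subset ?_
      intro j hj
      have : F j (fun n => c n k) ≠ 0 := by
        intro h0; apply hj; simp [mem_support, h0]
      exact ⟨fun n => c n k, mem_of_mem_nhds hV, hFsup j _ this⟩
    have hge : ((k : ℝ) + 1) ≤ Φ (fun n => c n k) := by
      have h2 := single_le_finsum k hsupfin
        (fun (j : ℕ) => add_nonneg (mul_nonneg (Nat.cast_nonneg j) (hFnn j _)) (hFnn j _))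
      rwa [hF1 k, mul_one] at h2
    have := hC (fun n => c n k)
    have habs : ((k : ℝ) + 1) ≤ C := le_trans hge (le_trans (le_abs_self _) this)
    linarith
  obtain ⟨y, hy⟩ := key
  set 𝒮 : Set (Set ℕ) :=
    {s | ∃ V ∈ nhds y, ∃ m : ℕ, s = {k | (V ∩ W k).Nonempty} ∩ Set.Ici m} with h𝒮_def
  have hdir : ∀ t, t.Finite → t ⊆ 𝒮 → ∃ V ∈ nhds y, ∃ m : ℕ,
      {k | (V ∩ W k).Nonempty} ∩ Set.Ici m ⊆ ⋂₀ t := by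
    intro t htfin
    refine Set.Finite.induction_on (motive := fun t _ => t ⊆ 𝒮 → ∃ V ∈ nhds y, ∃ m : ℕ,
      {k | (V ∩ W k).Nonempty} ∩ Set.Ici m ⊆ ⋂₀ t) t htfin (fun _ => ⟨univ, univ_mem, 0, by simp⟩) ?_
    intro s t' hs ht' IH ht
    · obtain ⟨V, hV, m, hsub⟩ := IH (fun x hx => ht (Set.mem_insert_of_mem _ hx))
      obtain ⟨Vs, hVs, ms, rfl⟩ := ht (Set.mem_insert s t')
      refine ⟨V ∩ Vs, inter_mem hV hVs, max m ms, ?_⟩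
      rintro k ⟨⟨z, hz1, hz2⟩, hk⟩
      rw [Set.sInter_insert]
      constructor
      · exact ⟨⟨z, hz1.2, hz2⟩, Set.mem_Ici.2 (le_trans (le_max_right _ _) hk)⟩
      · exact hsub ⟨⟨z, hz1.1, hz2⟩, Set.mem_Ici.2 (le_trans (le_max_left _ _) hk)⟩
  have hfip : ∀ V ∈ nhds y, ∀ m : ℕ, ({k | (V ∩ W k).Nonempty} ∩ Set.Ici m).Nonempty := by
    intro V hV m
    have : ({k | (V ∩ W k).Nonempty} \ Set.Iio m).Nonempty :=
      ((hy V hV).diff (Set.finite_Iio m)).nonempty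
    obtain ⟨k, hk1, hk2⟩ := this
    exact ⟨k, hk1, Set.mem_Ici.2 (not_lt.1 hk2)⟩
  have hne_bot : (Filter.generate 𝒮).NeBot := by
    rw [Filter.generate_neBot_iff]
    intro t ht htfin
    obtain ⟨V, hV, m, hsub⟩ := hdir t htfin ht
    exact (hfip V hV m).mono hsub
  set p := Ultrafilter.of (Filter.generate 𝒮) with hp_def
  have hple : (p : Filter ℕ) ≤ Filter.generate 𝒮 := Ultrafilter.of_le _
  have hmem𝒮 : ∀ s ∈ 𝒮, s ∈ p := fun s hs => hple (Filter.mem_generate_of_mem hs)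
  have hIci : ∀ m : ℕ, Set.Ici m ∈ p := by
    intro m
    have h1 : {k | ((univ : Set (ℕ → X)) ∩ W k).Nonempty} ∩ Set.Ici m ∈ p :=
      hmem𝒮 _ ⟨univ, univ_mem, m, rfl⟩
    exact Filter.mem_of_superset h1 (Set.inter_subset_right)
  have hfree : FreeUF p := by
    intro n hn
    have h1 := (p : Filter ℕ).inter_mem hn (hIci (n+1))
    have h2 : ({n} : Set ℕ) ∩ Set.Ici (n+1) = ∅ := by
      ext k
      simp only [Set.mem_inter_iff, Set.mem_singleton_iff, Set.mem_Ici,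
        Set.mem_empty_iff_false, iff_false, not_and]
      omega
    rw [h2] at h1
    exact p.empty_notMem h1
  refine ⟨p, hfree, fun n => ⟨y n, fun V hV => ?_⟩⟩
  have hV' : (fun z : ℕ → X => z n) ⁻¹' V ∈ nhds y :=
    (continuous_apply n).continuousAt hV
  have h1 : {k | (((fun z : ℕ → X => z n) ⁻¹' V) ∩ W k).Nonempty} ∩ Set.Ici n ∈ p :=
    hmem𝒮 _ ⟨_, hV', n, rfl⟩
  refine Filter.mem_of_superset h1 ?_
  rintro k ⟨⟨z, hz1, hz2⟩, hk⟩
  exact ⟨z n, hz1, (hWmem k z).1 hz2 n hk⟩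

lemma reverse_dir {X : Type*} [TopologicalSpace X]
    (hRHS : ∀ U : ℕ → ℕ → Set X,
        (∀ n k, IsOpen (U n k)) → (∀ n k, (U n k).Nonempty) →
        (∀ n k l, k ≠ l → U n k ∩ U n l = ∅) →
        ∃ p : Ultrafilter ℕ, FreeUF p ∧
          ∀ n, ∃ x : X, ∀ V ∈ nhds x, {k | (V ∩ U n k).Nonempty} ∈ p) :
    Pseudocompact (ℕ → X) := by
  classical
  intro f hf
  by_contra hub
  push_neg at hub
  have hex : ∀ k : ℕ, ∃ y : ℕ → X, (k : ℝ) < |f y| := by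
    intro k
    obtain ⟨y, hy⟩ := hub k
    exact ⟨y, hy⟩
  choose y hy using hex
  have hXne : Nonempty X := ⟨y 0 0⟩
  -- boxes
  have hO : ∀ k : ℕ, IsOpen (f ⁻¹' {r : ℝ | (k : ℝ) < |r|}) := fun k =>
    (isOpen_lt continuous_const continuous_abs).preimage hf
  have hbox0 : ∀ k : ℕ, ∃ (I : Finset ℕ) (u : ℕ → Set X),
      (∀ n ∈ I, IsOpen (u n) ∧ y k n ∈ u n) ∧
      (I : Set ℕ).pi u ⊆ f ⁻¹' {r : ℝ | (k : ℝ) < |r|} := by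
    intro k
    exact (isOpen_pi_iff.1 (hO k)) (y k) (hy k)
  choose I u hu1 hu2 using hbox0
  set A : ℕ → ℕ → Set X := fun n k => if n ∈ I k then u k n else univ with hA_def
  have hAopen : ∀ n k, IsOpen (A n k) := by
    intro n k
    rw [hA_def]
    by_cases h : n ∈ I k
    · simp only [h, if_pos]
      exact (hu1 k n h).1
    · simp only [h, if_neg, not_false_iff]
      exact isOpen_univ
  have hAne : ∀ n k, (A n k).Nonempty := by
    intro n k
    rw [hA_def]
    by_cases h : n ∈ I k
    · simp only [h, if_pos]
      exact ⟨y k n, (hu1 k n h).2⟩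
    · simp only [h, if_neg, not_false_iff]
      exact univ_nonempty
  have hbox : ∀ k (z : ℕ → X), (∀ n, z n ∈ A n k) → (k : ℝ) < |f z| := by
    intro k z hz
    apply hu2 k
    intro n hn
    have := hz n
    rw [hA_def] at this
    simp only [Finset.mem_coe.1 hn, if_pos] at this
    exact this
  -- the diagonal chain of subsequences
  have hdi : ∀ (n : ℕ) (d : {e : ℕ → ℕ // StrictMono e}),
      ∃ e' : ℕ → ℕ, StrictMono e' ∧ (∀ i, ∃ j, e' i = d.1 j) ∧
      ((∃ x : X, ∀ V ∈ nhds x, {i | (V ∩ A n (e' i)).Nonempty}ᶜ.Finite) ∨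
       (∃ W : ℕ → Set X, (∀ i, IsOpen (W i)) ∧ (∀ i, (W i).Nonempty) ∧
         (∀ i, W i ⊆ A n (e' i)) ∧ ∀ i j, i ≠ j → W i ∩ W j = ∅)) := by
    intro n d
    exact dichotomy (fun k => A n k) (hAopen n) (hAne n) d.1 d.2
  choose Ef hEmono hErange hEbr using hdi
  have hdouble : StrictMono (fun i : ℕ => 2 * i) := by
    intro a b h
    simp only []
    omega
  set E : ℕ → {e : ℕ → ℕ // StrictMono e} :=
    fun n => Nat.rec ⟨id, strictMono_id⟩
      (fun n d => ⟨fun i => Ef n d (2 * i), (hEmono n d).comp hdouble⟩) n with hE_def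
  have hE_succ : ∀ n, (E (n+1)).1 = fun i => Ef n (E n) (2 * i) := fun n => rfl
  -- range chain
  have hchain : ∀ n r i, ∃ j, (E (n + r)).1 i = (E n).1 j := by
    intro n r
    induction r with
    | zero => exact fun i => ⟨i, rfl⟩
    | succ r IH =>
      intro i
      have h1 : ∃ j, (E (n + r + 1)).1 i = (E (n + r)).1 j := by
        rw [hE_succ]
        exact hErange (n + r) (E (n + r)) (2 * i)
      obtain ⟨j, hj⟩ := h1
      obtain ⟨j', hj'⟩ := IH j
      exact ⟨j', by rw [show n + (r + 1) = n + r + 1 by ring, hj, hj']⟩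
  set t : ℕ → ℕ := fun j => (E j).1 j with ht_def
  have htmono : StrictMono t := by
    apply strictMono_nat_of_lt_succ
    intro j
    have h1 : (E j).1 (j + 1) ≤ (E (j + 1)).1 (j + 1) := by
      have := hchain j 1
      exact sub_ge (E j).2 (E (j+1)).2 (by intro i; exact this i) (j+1)
    calc t j = (E j).1 j := rfl
      _ < (E j).1 (j + 1) := (E j).2 (Nat.lt_succ_self j)
      _ ≤ (E (j+1)).1 (j+1) := h1
  have htrange : ∀ n j, n + 1 ≤ j → ∃ i, Ef n (E n) (2 * i) = t j := by
    intro n j hj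
    obtain ⟨r, hr⟩ : ∃ r, j = (n + 1) + r := ⟨j - (n+1), by omega⟩
    subst hr
    obtain ⟨i, hi⟩ := hchain (n+1) r (n + 1 + r)
    exact ⟨i, hi.symm⟩
  -- two normal forms per coordinate
  have hforms : ∀ n, (∃ x : X, ∀ V ∈ nhds x, {j | (V ∩ A n (t j)).Nonempty}ᶜ.Finite) ∨
      (∃ W : ℕ → Set X, (∀ j, IsOpen (W j)) ∧ (∀ j, (W j).Nonempty) ∧
        (∀ j j', j ≠ j' → W j ∩ W j' = ∅) ∧ {j | ¬ W j ⊆ A n (t j)}.Finite) := by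
    intro n
    rcases hEbr n (E n) with ⟨x, hx⟩ | ⟨W, hW1, hW2, hW3, hW4⟩
    · left
      refine ⟨x, fun V hV => ?_⟩
      have hfin := hx V hV
      set e' := Ef n (E n) with he'_def
      have he'mono : StrictMono e' := hEmono n (E n)
      -- index map
      set φ : ℕ → ℕ := fun j => if h : ∃ i, e' (2 * i) = t j then 2 * h.choose else 0 with hφ_def
      have hsub : {j | (V ∩ A n (t j)).Nonempty}ᶜ ⊆
          Set.Iic n ∪ {j | n + 1 ≤ j ∧ ¬ (V ∩ A n (t j)).Nonempty} := by
        intro j hj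
        simp only [mem_compl_iff, mem_setOf_eq] at hj
        by_cases h : n + 1 ≤ j
        · exact Or.inr ⟨h, hj⟩
        · exact Or.inl (by simpa using Nat.lt_succ_iff.1 (not_le.1 h))
      refine Set.Finite.subset (Set.Finite.union (Set.finite_Iic n) ?_) hsub
      apply Set.Finite.of_finite_image (f := φ)
      · refine hfin.subset ?_
        rintro m ⟨j, ⟨hj1, hj2⟩, rfl⟩
        have hex : ∃ i, e' (2 * i) = t j := htrange n j hj1
        simp only [hφ_def, dif_pos hex]
        simp only [mem_compl_iff, mem_setOf_eq]
        intro hcon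
        rw [hex.choose_spec] at hcon
        exact hj2 hcon
      · rintro j ⟨hj1, _⟩ j' ⟨hj1', _⟩ hφeq
        have hex : ∃ i, e' (2 * i) = t j := htrange n j hj1
        have hex' : ∃ i, e' (2 * i) = t j' := htrange n j' hj1'
        simp only [hφ_def, dif_pos hex, dif_pos hex'] at hφeq
        have : e' (2 * hex.choose) = e' (2 * hex'.choose) := by rw [hφeq]
        rw [hex.choose_spec, hex'.choose_spec] at this
        exact htmono.injective this
    · right
      set e' := Ef n (E n) with he'_def
      set φ : ℕ → ℕ := fun j => if h : ∃ i, e' (2 * i) = t j then 2 * h.choose else 2 * j + 1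
        with hφ_def
      have hφinj : Function.Injective φ := by
        intro j j' hφeq
        simp only [hφ_def] at hφeq
        by_cases h : ∃ i, e' (2 * i) = t j <;> by_cases h' : ∃ i, e' (2 * i) = t j'
        · rw [dif_pos h, dif_pos h'] at hφeq
          have : e' (2 * h.choose) = e' (2 * h'.choose) := by rw [hφeq]
          rw [h.choose_spec, h'.choose_spec] at this
          exact htmono.injective this
        · rw [dif_pos h, dif_neg h'] at hφeq; omega
        · rw [dif_neg h, dif_pos h'] at hφeq; omega
        · rw [dif_neg h, dif_neg h'] at hφeq; omega
      refine ⟨fun j => W (φ j), fun j => hW1 _, fun j => hW2 _, ?_, ?_⟩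
      · intro j j' hjj'
        exact hW4 _ _ fun hc => hjj' (hφinj hc)
      · refine (Set.finite_Iic n).subset ?_
        intro j hj
        simp only [mem_setOf_eq] at hj
        by_contra hcon
        simp only [Set.mem_Iic, not_le] at hcon
        have hex : ∃ i, e' (2 * i) = t j := htrange n j (by omega)
        apply hj
        simp only [hφ_def, dif_pos hex]
        have := hW3 (2 * hex.choose)
        rwa [hex.choose_spec] at this
  -- get a free ultrafilter with simultaneous accumulation
  have hmain : ∃ p : Ultrafilter ℕ, FreeUF p ∧
      ∀ n, ∃ x : X, ∀ V ∈ nhds x, {j | (V ∩ A n (t j)).Nonempty} ∈ p := by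
    by_cases h2 : ∃ n₀, ∃ W : ℕ → Set X, (∀ j, IsOpen (W j)) ∧ (∀ j, (W j).Nonempty) ∧
        (∀ j j', j ≠ j' → W j ∩ W j' = ∅) ∧ {j | ¬ W j ⊆ A n₀ (t j)}.Finite
    · obtain ⟨n₀, W₀, hW₀1, hW₀2, hW₀3, _⟩ := h2
      have hU : ∀ n, ∃ W : ℕ → Set X, (∀ j, IsOpen (W j)) ∧ (∀ j, (W j).Nonempty) ∧
          (∀ j j', j ≠ j' → W j ∩ W j' = ∅) ∧
          ((∃ x : X, ∀ V ∈ nhds x, {j | (V ∩ A n (t j)).Nonempty}ᶜ.Finite) ∨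
            {j | ¬ W j ⊆ A n (t j)}.Finite) := by
        intro n
        rcases hforms n with h | ⟨W, a1, a2, a3, a4⟩
        · exact ⟨W₀, hW₀1, hW₀2, hW₀3, Or.inl h⟩
        · exact ⟨W, a1, a2, a3, Or.inr a4⟩
      choose Ufam hUo hUne hUdisj hUalt using hU
      obtain ⟨p, hpfree, hpacc⟩ := hRHS Ufam hUo hUne hUdisj
      refine ⟨p, hpfree, fun n => ?_⟩
      rcases hUalt n with h | hfin
      · obtain ⟨x, hx⟩ := h
        exact ⟨x, fun V hV => mem_of_compl_finite hpfree (hx V hV)⟩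
      · obtain ⟨x, hx⟩ := hpacc n
        refine ⟨x, fun V hV => ?_⟩
        have h1 : {j | (V ∩ Ufam n j).Nonempty} ∈ p := hx V hV
        have h2' : {j | Ufam n j ⊆ A n (t j)} ∈ p := by
          apply mem_of_compl_finite hpfree
          refine hfin.subset ?_
          intro j hj
          simpa using hj
        refine Filter.mem_of_superset ((p : Filter ℕ).inter_mem h1 h2') ?_
        rintro j ⟨⟨z, hz1, hz2⟩, hj2⟩
        exact ⟨z, hz1, hj2 hz2⟩
    · push_neg at h2
      have hall : ∀ n, ∃ x : X, ∀ V ∈ nhds x, {j | (V ∩ A n (t j)).Nonempty}ᶜ.Finite := by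
        intro n
        rcases hforms n with h | ⟨W, a1, a2, a3, a4⟩
        · exact h
        · exact absurd a4 (h2 n W a1 a2 a3)
      refine ⟨Filter.hyperfilter ℕ, ?_, ?_⟩
      · intro n hn
        exact (Set.finite_singleton n).notMem_hyperfilter hn
      · intro n
        obtain ⟨x, hx⟩ := hall n
        refine ⟨x, fun V hV => ?_⟩
        refine mem_of_compl_finite ?_ (hx V hV)
        intro n hn
        exact (Set.finite_singleton n).notMem_hyperfilter hn
  obtain ⟨p, hpfree, hpacc⟩ := hmain
  choose x hx using hpacc
  set c : ℝ := |f x| with hc_def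
  -- a neighborhood where |f| stays close to |f x|
  have hOx : IsOpen (f ⁻¹' {r : ℝ | |r - f x| < 1}) := by
    have h0 : IsOpen {r : ℝ | |r - f x| < 1} :=
      isOpen_lt ((continuous_id.sub continuous_const).abs) continuous_const
    exact h0.preimage hf
  have hxOx : x ∈ f ⁻¹' {r : ℝ | |r - f x| < 1} := by
    show |f x - f x| < 1
    simp
  obtain ⟨G, V, hGV1, hGV2⟩ := isOpen_pi_iff.1 hOx x hxOx
  obtain ⟨m, hm⟩ := exists_nat_gt (c + 1)
  have hPmem : ∀ n ∈ G, {j | (V n ∩ A n (t j)).Nonempty} ∈ p := by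
    intro n hn
    exact hx n (V n) ((hGV1 n hn).1.mem_nhds (hGV1 n hn).2)
  have hQ : {j | m ≤ t j} ∈ p := by
    apply mem_of_compl_finite hpfree
    refine (Set.finite_Iio m).subset ?_
    intro j hj
    simp only [mem_compl_iff, mem_setOf_eq, not_le] at hj
    have : j ≤ t j := htmono.le_apply
    simp only [Set.mem_Iio]
    omega
  have hT : (⋂ n ∈ G, {j | (V n ∩ A n (t j)).Nonempty}) ∩ {j | m ≤ t j} ∈ p := by
    refine (p : Filter ℕ).inter_mem ?_ hQ
    exact (Filter.biInter_mem G.finite_toSet).2 hPmem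
  obtain ⟨j, hj⟩ := Ultrafilter.nonempty_of_mem hT
  obtain ⟨hj1, hj2⟩ := hj
  simp only [Set.mem_iInter, mem_setOf_eq] at hj1 hj2
  set k := t j with hk_def
  have hz : ∀ n, ∃ zn : X, zn ∈ A n k ∧ (n ∈ G → zn ∈ V n) := by
    intro n
    by_cases hn : n ∈ G
    · obtain ⟨z, hz1, hz2⟩ := hj1 n hn
      exact ⟨z, hz2, fun _ => hz1⟩
    · obtain ⟨z, hz⟩ := hAne n k
      exact ⟨z, hz, fun h => absurd h hn⟩
  choose z hz1 hz2 using hz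
  have hzO : z ∈ f ⁻¹' {r : ℝ | |r - f x| < 1} := by
    apply hGV2
    intro n hn
    exact hz2 n hn
  have hzbox : (k : ℝ) < |f z| := hbox k z hz1
  simp only [Set.mem_preimage, mem_setOf_eq] at hzO
  have h1 : |f z| < c + 1 := by
    have := abs_sub_abs_le_abs_sub (f z) (f x)
    rw [← hc_def] at this
    linarith
  have h2 : (m : ℝ) ≤ (k : ℝ) := by exact_mod_cast hj2
  linarith

/-- `X^ω` is pseudocompact iff every countable family of disjoint sequences of
nonempty open subsets of `X` admits a common free ultrafilter of accumulation. -/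
theorem stmt_11 {X : Type*} [TopologicalSpace X] [T2Space X] [CompletelyRegularSpace X] :
    Pseudocompact (ℕ → X) ↔
      ∀ U : ℕ → ℕ → Set X,
        (∀ n k, IsOpen (U n k)) → (∀ n k, (U n k).Nonempty) →
        (∀ n k l, k ≠ l → U n k ∩ U n l = ∅) →
        ∃ p : Ultrafilter ℕ, FreeUF p ∧
          ∀ n, ∃ x : X, ∀ V ∈ nhds x, {k | (V ∩ U n k).Nonempty} ∈ p := by
  constructor
  · intro hP U hopen hne _
    exact forward_dir hP U hopen hne
  · intro h
    exact reverse_dir h
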